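/- Let T ≥ 1 and k ≥ 0 be integers, (Ω₀, P₀) a probability space, and A, B ⊆ Ω₀ events with P₀(A) = p > 0 and q·p ≤ P₀(A ∩ B) ≤ q'·p for reals q, q' ∈ [0,1]. Consider the product probability space Ω = Ω₀^T × ({0,1}^k)^{{1,…,T}} × {0,1}^k with measure P₀^{⊗T} ⊗ (uniform over functions h : {1,…,T} → {0,1}^k) ⊗ (uniform over r ∈ {0,1}^k). For ω = (ω_1, …, ω_T, h, r), let 𝒜(ω) = {i : ω_i ∈ A}, and let G be the event that 𝒜(ω) ≠ ∅ and, writing i* = min 𝒜(ω), both h(i*) = r and ω_{i*} ∈ B hold. Then (1 − (1 − p)^T) · q · 2^{−k} ≤ P(G) ≤ q' · 2^{−k}. -/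

import Mathlib

open MeasureTheory

/-- In `T` i.i.d. repetitions (together with an independent uniformly
random hash function `h : {1,…,T} → {0,1}^k` and target `r ∈ {0,1}^k`), the probability of
the event `G` — that some repetition lies in `A`, and the first such repetition `i*`
satisfies `h(i*) = r` and also lies in `B` — is between `(1-(1-p)^T)·q·2^{-k}` and
`q'·2^{-k}`, where `p = P₀(A) > 0` and `q·p ≤ P₀(A ∩ B) ≤ q'·p`. -/
theorem statement_13 {Ω₀ : Type*} [MeasurableSpace Ω₀] (P₀ : Measure Ω₀)
    [IsProbabilityMeasure P₀]
    (T k : ℕ) (hT : 1 ≤ T)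
    (A B : Set Ω₀) (hA : MeasurableSet A) (hB : MeasurableSet B)
    (p q q' : ℝ)
    (hp : (P₀ A).toReal = p) (hppos : 0 < p)
    (hq : q ∈ Set.Icc (0 : ℝ) 1) (hq' : q' ∈ Set.Icc (0 : ℝ) 1)
    (hlow : q * p ≤ (P₀ (A ∩ B)).toReal) (hhigh : (P₀ (A ∩ B)).toReal ≤ q' * p) :
    (((Measure.pi fun _ : Fin T => P₀).prod
        ((PMF.uniformOfFintype ((Fin T → (Fin k → Bool)) × (Fin k → Bool))).toMeasure))
      {ω : (Fin T → Ω₀) × ((Fin T → (Fin k → Bool)) × (Fin k → Bool)) |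
        ∃ i : Fin T, ω.1 i ∈ A ∧ (∀ j : Fin T, ω.1 j ∈ A → i ≤ j) ∧
          ω.2.1 i = ω.2.2 ∧ ω.1 i ∈ B}).toReal
      ∈ Set.Icc ((1 - (1 - p) ^ T) * q * ((2 : ℝ) ^ k)⁻¹) (q' * ((2 : ℝ) ^ k)⁻¹) := by
  classical
  set μ : Measure (Fin T → Ω₀) := Measure.pi fun _ : Fin T => P₀ with hμ
  set ν : Measure ((Fin T → (Fin k → Bool)) × (Fin k → Bool)) :=
    (PMF.uniformOfFintype ((Fin T → (Fin k → Bool)) × (Fin k → Bool))).toMeasure with hν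
  set Es : Fin T → Set (Fin T → Ω₀) := fun i =>
    Set.univ.pi (fun j => if j = i then A ∩ B else if j < i then Aᶜ else Set.univ) with hEs
  set Hs : Fin T → Set ((Fin T → (Fin k → Bool)) × (Fin k → Bool)) :=
    fun i => {hr | hr.1 i = hr.2} with hHs
  have hEmeas : ∀ i, MeasurableSet (Es i) := by
    intro i
    refine MeasurableSet.univ_pi fun j => ?_
    split_ifs
    · exact hA.inter hB
    · exact hA.compl
    · exact MeasurableSet.univ
  have hHmeas : ∀ i : Fin T, MeasurableSet (Hs i) :=
    fun i => (Set.toFinite _).measurableSet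
  -- decomposition of the event as a disjoint union
  have hG : {ω : (Fin T → Ω₀) × ((Fin T → (Fin k → Bool)) × (Fin k → Bool)) |
        ∃ i : Fin T, ω.1 i ∈ A ∧ (∀ j : Fin T, ω.1 j ∈ A → i ≤ j) ∧
          ω.2.1 i = ω.2.2 ∧ ω.1 i ∈ B} = ⋃ i, (Es i) ×ˢ (Hs i) := by
    ext ω
    simp only [Set.mem_setOf_eq, Set.mem_iUnion, Set.mem_prod, hEs, hHs, Set.mem_pi,
      Set.mem_univ, true_implies]
    constructor
    · rintro ⟨i, hiA, hmin, hhr, hiB⟩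
      refine ⟨i, fun j => ?_, hhr⟩
      split_ifs with h1 h2
      · subst h1; exact ⟨hiA, hiB⟩
      · exact fun hj => absurd (hmin j hj) (not_le.2 h2)
      · trivial
    · rintro ⟨i, hEi, hhr⟩
      have h1 := hEi i
      rw [if_pos rfl] at h1
      refine ⟨i, h1.1, fun j hj => ?_, hhr, h1.2⟩
      by_contra hle
      have hji : j < i := not_le.1 hle
      have h2 := hEi j
      rw [if_neg (Fin.ne_of_lt hji), if_pos hji] at h2
      exact h2 hj
  have hdisj : Pairwise (Function.onFun Disjoint fun i => (Es i) ×ˢ (Hs i)) := by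
    intro i j hij
    rw [Function.onFun, Set.disjoint_left]
    rintro ω ⟨hEi, -⟩ ⟨hEj, -⟩
    rcases hij.lt_or_gt with h | h
    · have h1 := hEi i (Set.mem_univ i)
      have h2 := hEj i (Set.mem_univ i)
      dsimp only at h1 h2
      rw [if_pos rfl] at h1
      rw [if_neg (Fin.ne_of_lt h), if_pos h] at h2
      exact h2 h1.1
    · have h1 := hEj j (Set.mem_univ j)
      have h2 := hEi j (Set.mem_univ j)
      dsimp only at h1 h2
      rw [if_pos rfl] at h1
      rw [if_neg (Fin.ne_of_lt h), if_pos h] at h2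
      exact h2 h1.1
  -- measure of the Ω₀-part of each slice
  have hμE : ∀ i : Fin T, μ (Es i) = P₀ (A ∩ B) * (P₀ Aᶜ) ^ (i : ℕ) := by
    intro i
    rw [hμ, hEs, Measure.pi_pi]
    have hval : ∀ j : Fin T, P₀ (if j = i then A ∩ B else if j < i then Aᶜ else Set.univ)
        = if j = i then P₀ (A ∩ B) else if j < i then P₀ Aᶜ else 1 := by
      intro j; split_ifs <;> simp
    simp only [hval]
    rw [← Finset.mul_prod_erase Finset.univ _ (Finset.mem_univ i), if_pos rfl]
    congr 1
    have h1 : ∀ j ∈ Finset.univ.erase i,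
        (if j = i then P₀ (A ∩ B) else if j < i then P₀ Aᶜ else 1)
          = (if j < i then P₀ Aᶜ else 1) := by
      intro j hj
      rw [if_neg (Finset.mem_erase.1 hj).1]
    rw [Finset.prod_congr rfl h1, Finset.prod_ite, Finset.prod_const, Finset.prod_const,
      one_pow, mul_one]
    congr 1
    have heq : (Finset.univ.erase i).filter (fun j => j < i) = Finset.Iio i := by
      ext j
      simp only [Finset.mem_filter, Finset.mem_erase, Finset.mem_univ, Finset.mem_Iio, true_and,
        and_iff_right_iff_imp]
      exact fun h => ⟨Fin.ne_of_lt h, trivial⟩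
    rw [heq, Fin.card_Iio]
  -- measure of the hash-part of each slice
  have hνH : ∀ i : Fin T, ν (Hs i) = ((2 : ENNReal) ^ k)⁻¹ := by
    intro i
    rw [hν, hHs, PMF.toMeasure_uniformOfFintype_apply _ (Set.toFinite _).measurableSet]
    have e : {hr : (Fin T → (Fin k → Bool)) × (Fin k → Bool) | hr.1 i = hr.2}
        ≃ (Fin T → (Fin k → Bool)) :=
      { toFun := fun x => x.1.1
        invFun := fun h => ⟨(h, h i), rfl⟩
        left_inv := fun x => by
          ext : 1
          exact Prod.ext rfl x.2
        right_inv := fun h => rfl }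
    simp only [← Nat.card_eq_fintype_card]
    have hcard : Nat.card {hr : (Fin T → (Fin k → Bool)) × (Fin k → Bool) | hr.1 i = hr.2}
        = (2 ^ k) ^ T := by
      rw [Nat.card_congr e]
      simp [Nat.card_eq_fintype_card, Fintype.card_fun]
    have hcard2 : Nat.card ((Fin T → (Fin k → Bool)) × (Fin k → Bool))
        = (2 ^ k) ^ T * 2 ^ k := by
      simp [Nat.card_eq_fintype_card, Fintype.card_fun]
    rw [hcard, hcard2]
    push_cast
    rw [ENNReal.div_eq_inv_mul]
    rw [ENNReal.mul_inv (by left; positivity) (by left; exact ENNReal.pow_ne_top (by simp))]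
    rw [mul_comm ((((2 : ENNReal) ^ k) ^ T)⁻¹) _, mul_assoc,
      ENNReal.inv_mul_cancel (by positivity) (ENNReal.pow_ne_top (by simp)), mul_one]
  -- compute the total measure
  have hmeas : (μ.prod ν) {ω : (Fin T → Ω₀) × ((Fin T → (Fin k → Bool)) × (Fin k → Bool)) |
        ∃ i : Fin T, ω.1 i ∈ A ∧ (∀ j : Fin T, ω.1 j ∈ A → i ≤ j) ∧
          ω.2.1 i = ω.2.2 ∧ ω.1 i ∈ B}
      = ∑ i : Fin T, P₀ (A ∩ B) * (P₀ Aᶜ) ^ (i : ℕ) * ((2 : ENNReal) ^ k)⁻¹ := by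
    rw [hG, measure_iUnion hdisj (fun i => (hEmeas i).prod (hHmeas i)), tsum_fintype]
    refine Finset.sum_congr rfl fun i _ => ?_
    rw [Measure.prod_prod, hμE i, hνH i]
  rw [hmeas]
  -- pass to reals
  have hmne : ∀ i : Fin T,
      P₀ (A ∩ B) * (P₀ Aᶜ) ^ (i : ℕ) * ((2 : ENNReal) ^ k)⁻¹ ≠ ⊤ := by
    intro i
    refine ENNReal.mul_ne_top (ENNReal.mul_ne_top (measure_ne_top _ _)
      (ENNReal.pow_ne_top (measure_ne_top _ _))) ?_
    simp [ENNReal.inv_ne_top]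
  rw [ENNReal.toReal_sum (fun i _ => hmne i)]
  have hcompl : (P₀ Aᶜ).toReal = 1 - p := by
    rw [prob_compl_eq_one_sub hA, ENNReal.toReal_sub_of_le prob_le_one (by simp), hp]
    simp
  have h2k : (((2 : ENNReal) ^ k)⁻¹).toReal = ((2 : ℝ) ^ k)⁻¹ := by
    rw [ENNReal.toReal_inv, ENNReal.toReal_pow]
    norm_num
  set d : ℝ := (P₀ (A ∩ B)).toReal with hd
  have hterm : ∀ i : Fin T,
      (P₀ (A ∩ B) * (P₀ Aᶜ) ^ (i : ℕ) * ((2 : ENNReal) ^ k)⁻¹).toReal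
        = d * (1 - p) ^ (i : ℕ) * ((2 : ℝ) ^ k)⁻¹ := by
    intro i
    rw [ENNReal.toReal_mul, ENNReal.toReal_mul, ENNReal.toReal_pow, hcompl, h2k, hd]
  simp only [hterm]
  -- evaluate the geometric sum
  have hp1 : p ≤ 1 := by
    rw [← hp]
    exact (ENNReal.toReal_le_of_le_ofReal one_pos.le (by simpa using prob_le_one))
  have hx1 : (1 : ℝ) - p ≠ 1 := by intro h; linarith
  have hsum : (∑ i : Fin T, d * (1 - p) ^ (i : ℕ) * ((2 : ℝ) ^ k)⁻¹)
      = d * ((1 - (1 - p) ^ T) / p) * ((2 : ℝ) ^ k)⁻¹ := by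
    rw [Fin.sum_univ_eq_sum_range (fun n => d * (1 - p) ^ n * ((2 : ℝ) ^ k)⁻¹) T]
    rw [show (∑ n ∈ Finset.range T, d * (1 - p) ^ n * ((2 : ℝ) ^ k)⁻¹)
        = (∑ n ∈ Finset.range T, (1 - p) ^ n) * (d * ((2 : ℝ) ^ k)⁻¹) by
      rw [Finset.sum_mul]; refine Finset.sum_congr rfl fun n _ => by ring]
    rw [geom_sum_eq hx1]
    field_simp
    ring
  rw [hsum]
  -- final real-number bounds
  have hm0 : (0 : ℝ) ≤ ((2 : ℝ) ^ k)⁻¹ := by positivity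
  have hd0 : 0 ≤ d := ENNReal.toReal_nonneg
  have hs0 : 0 ≤ 1 - (1 - p) ^ T := by
    have : (1 - p) ^ T ≤ 1 := pow_le_one₀ (by linarith) (by linarith)
    linarith
  have hs1 : 1 - (1 - p) ^ T ≤ 1 := by
    have : (0 : ℝ) ≤ (1 - p) ^ T := pow_nonneg (by linarith) T
    linarith
  constructor
  · have h1 : (1 - (1 - p) ^ T) * q * ((2 : ℝ) ^ k)⁻¹
        = (q * p) * ((1 - (1 - p) ^ T) / p) * ((2 : ℝ) ^ k)⁻¹ := by
      field_simp
    rw [h1]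
    exact mul_le_mul_of_nonneg_right
      (mul_le_mul_of_nonneg_right hlow (div_nonneg hs0 hppos.le)) hm0
  · have h2 : d * ((1 - (1 - p) ^ T) / p) ≤ q' := by
      have step1 : d * ((1 - (1 - p) ^ T) / p) ≤ (q' * p) * ((1 - (1 - p) ^ T) / p) :=
        mul_le_mul_of_nonneg_right hhigh (div_nonneg hs0 hppos.le)
      have step2 : (q' * p) * ((1 - (1 - p) ^ T) / p) = q' * (1 - (1 - p) ^ T) := by
        field_simp
      have step3 : q' * (1 - (1 - p) ^ T) ≤ q' := by
        nlinarith [hq'.1, hq'.2]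
      linarith [step1, step2 ▸ step1]
    calc d * ((1 - (1 - p) ^ T) / p) * ((2 : ℝ) ^ k)⁻¹
        ≤ q' * ((2 : ℝ) ^ k)⁻¹ := mul_le_mul_of_nonneg_right h2 hm0
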